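/- Let t = (t_{i,j,k})_{1 ≤ i < j < k ≤ n} be a family of integers such that the normal form map N_t : ℤ^n → G(t) is bijective. Then there exist multivariate polynomials K_1, …, K_n ∈ ℚ[x_1, …, x_n, z] such that K_i(x, z) ∈ ℤ for all x ∈ ℤ^n and z ∈ ℤ and, for all x ∈ ℤ^n and z ∈ ℤ, the equation (a_1^{x_1} ⋯ a_n^{x_n})^z = a_1^{K_1(x,z)} ⋯ a_n^{K_n(x,z)} holds in G(t). -/

import Mathlib

namespace HallPoly

open MvPolynomial

/-- A function `(σ → ℤ) → ℤ` is polynomial if it is the restriction of a `ℚ`-polynomial. -/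
def IsPoly {σ : Type} (f : (σ → ℤ) → ℤ) : Prop :=
  ∃ p : MvPolynomial σ ℚ, ∀ x : σ → ℤ, (f x : ℚ) = MvPolynomial.eval (fun i => (x i : ℚ)) p

lemma IsPoly.const {σ : Type} (c : ℤ) : IsPoly (fun _ : σ → ℤ => c) :=
  ⟨MvPolynomial.C (c : ℚ), fun _ => by simp⟩

lemma IsPoly.proj {σ : Type} (i : σ) : IsPoly (fun x : σ → ℤ => x i) :=
  ⟨MvPolynomial.X i, fun _ => by simp⟩

lemma IsPoly.add {σ : Type} {f g : (σ → ℤ) → ℤ} (hf : IsPoly f) (hg : IsPoly g) :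
    IsPoly (fun x => f x + g x) := by
  obtain ⟨p, hp⟩ := hf; obtain ⟨q, hq⟩ := hg
  exact ⟨p + q, fun x => by push_cast [hp x, hq x]; simp⟩

lemma IsPoly.mul {σ : Type} {f g : (σ → ℤ) → ℤ} (hf : IsPoly f) (hg : IsPoly g) :
    IsPoly (fun x => f x * g x) := by
  obtain ⟨p, hp⟩ := hf; obtain ⟨q, hq⟩ := hg
  exact ⟨p * q, fun x => by push_cast [hp x, hq x]; simp⟩

lemma IsPoly.neg {σ : Type} {f : (σ → ℤ) → ℤ} (hf : IsPoly f) :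
    IsPoly (fun x => - f x) := by
  obtain ⟨p, hp⟩ := hf
  exact ⟨-p, fun x => by push_cast [hp x]; simp⟩

lemma IsPoly.sub {σ : Type} {f g : (σ → ℤ) → ℤ} (hf : IsPoly f) (hg : IsPoly g) :
    IsPoly (fun x => f x - g x) := by
  simpa [sub_eq_add_neg] using hf.add hg.neg

lemma IsPoly.comp {σ τ : Type} {f : (σ → ℤ) → ℤ} (hf : IsPoly f)
    (g : σ → (τ → ℤ) → ℤ) (hg : ∀ i, IsPoly (g i)) :
    IsPoly (fun y => f fun i => g i y) := by
  obtain ⟨p, hp⟩ := hf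
  choose q hq using hg
  refine ⟨MvPolynomial.bind₁ q p, fun y => ?_⟩
  have h1 : ((f fun i => g i y : ℤ) : ℚ) = MvPolynomial.eval (fun i => ((g i y : ℤ) : ℚ)) p :=
    hp _
  simp only [h1, MvPolynomial.eval, MvPolynomial.eval₂Hom_bind₁]
  exact MvPolynomial.eval₂Hom_congr rfl (funext fun i => by rw [hq i y]; rfl) rfl

lemma IsPoly.congr {σ : Type} {f g : (σ → ℤ) → ℤ} (hf : IsPoly f) (h : ∀ x, f x = g x) :
    IsPoly g := by
  obtain ⟨p, hp⟩ := hf; exact ⟨p, fun x => by rw [← h x]; exact hp x⟩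



open MvPolynomial Polynomial

/-- Discrete antiderivative in `ℚ[X]`: the difference operator is surjective. -/
lemma delta_surj : ∀ (d : ℕ) (p : Polynomial ℚ), p.natDegree ≤ d →
    ∃ q : Polynomial ℚ, q.comp (Polynomial.X + 1) - q = p := by
  intro d
  induction d with
  | zero =>
    intro p hp
    refine ⟨Polynomial.C (p.coeff 0) * Polynomial.X, ?_⟩
    rw [Polynomial.eq_C_of_natDegree_le_zero hp]
    simp [Polynomial.mul_comp]
    ring
  | succ d ih =>
    intro p hp
    set c : ℚ := p.coeff (d + 1) with hc
    set q₁ : Polynomial ℚ := Polynomial.C (c / (d + 2)) * Polynomial.X ^ (d + 2) with hq₁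
    have hΔ : q₁.comp (Polynomial.X + 1) - q₁ =
        Polynomial.C (c / (d + 2)) * ((Polynomial.X + 1) ^ (d + 2) - Polynomial.X ^ (d + 2)) := by
      simp [hq₁, Polynomial.mul_comp, Polynomial.pow_comp]
      ring
    set r : Polynomial ℚ := p - (q₁.comp (Polynomial.X + 1) - q₁) with hr
    have hd2 : ((d : ℚ) + 2) ≠ 0 := by positivity
    have hrd : r.natDegree ≤ d := by
      rw [Polynomial.natDegree_le_iff_coeff_eq_zero]
      intro m hm
      have hm1 : d + 1 ≤ m := hm
      rw [hr, hΔ]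
      simp only [Polynomial.coeff_sub, Polynomial.coeff_C_mul, Polynomial.coeff_X_pow,
        Polynomial.coeff_X_add_one_pow]
      rcases eq_or_lt_of_le hm1 with h1 | h1
      · have hm' : m = d + 1 := h1.symm
        subst hm'
        rw [if_neg (by omega), Nat.choose_succ_self_right]
        push_cast
        field_simp
        rw [hc]
        ring
      · -- m ≥ d+2
        have hp0 : p.coeff m = 0 := by
          apply Polynomial.coeff_eq_zero_of_natDegree_lt
          omega
        rcases eq_or_lt_of_le (show d + 2 ≤ m by omega) with h2 | h2
        · rw [hp0, ← h2]
          simp [Nat.choose_self]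
        · rw [hp0]
          rw [Nat.choose_eq_zero_of_lt h2]
          simp
          omega
      done
    obtain ⟨q₂, hq₂⟩ := ih r hrd
    refine ⟨q₁ + q₂, ?_⟩
    rw [Polynomial.add_comp]
    rw [hr] at hq₂
    linear_combination hq₂

/-- Evaluation point: `x` on the `σ`-variables and `m` on the distinguished variable. -/
def pt {σ : Type} (x : σ → ℚ) (m : ℚ) : σ ⊕ Unit → ℚ := Sum.elim x (fun _ => m)

lemma exists_antideriv {σ : Type} (P : MvPolynomial (σ ⊕ Unit) ℚ) :
    ∃ Q : MvPolynomial (σ ⊕ Unit) ℚ, ∀ (x : σ → ℚ) (m : ℚ),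
      MvPolynomial.eval (pt x (m+1)) Q - MvPolynomial.eval (pt x m) Q
        = MvPolynomial.eval (pt x m) P := by
  induction P using MvPolynomial.induction_on' with
  | add p q hp hq =>
    obtain ⟨Qp, hQp⟩ := hp; obtain ⟨Qq, hQq⟩ := hq
    refine ⟨Qp + Qq, fun x m => by simp only [map_add]; linarith [hQp x m, hQq x m]⟩
  | monomial u a =>
    set k : ℕ := u (Sum.inr ()) with hk
    set u' : (σ ⊕ Unit) →₀ ℕ := Finsupp.erase (Sum.inr ()) u with hu'
    have hsplit : (MvPolynomial.monomial u a : MvPolynomial (σ ⊕ Unit) ℚ)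
        = MvPolynomial.monomial u' a * MvPolynomial.X (Sum.inr ()) ^ k := by
      rw [MvPolynomial.X_pow_eq_monomial, MvPolynomial.monomial_mul, mul_one]
      exact congrArg (fun w => MvPolynomial.monomial w a)
        (Finsupp.erase_add_single (Sum.inr ()) u).symm
    have hindep : ∀ (x : σ → ℚ) (m m' : ℚ),
        MvPolynomial.eval (pt x m) (MvPolynomial.monomial u' a)
          = MvPolynomial.eval (pt x m') (MvPolynomial.monomial u' a) := by
      intro x m m'
      rw [MvPolynomial.eval_monomial, MvPolynomial.eval_monomial]
      congr 1
      apply Finsupp.prod_congr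
      intro v hv
      rcases v with i | uu
      · rfl
      · exfalso
        have : u' (Sum.inr uu) ≠ 0 := Finsupp.mem_support_iff.mp hv
        apply this
        cases uu
        simp [hu']
    obtain ⟨q, hq⟩ := delta_surj k (Polynomial.X ^ k) (by simp)
    have hqe : ∀ m : ℚ, q.eval (m + 1) - q.eval m = m ^ k := by
      intro m
      have := congrArg (Polynomial.eval m) hq
      simpa using this
    set T : MvPolynomial (σ ⊕ Unit) ℚ :=
      Polynomial.aeval (MvPolynomial.X (Sum.inr ()) : MvPolynomial (σ ⊕ Unit) ℚ) q with hT
    have hTe : ∀ g : (σ ⊕ Unit) → ℚ, MvPolynomial.eval g T = q.eval (g (Sum.inr ())) := by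
      intro g
      have h1 := Polynomial.aeval_algHom_apply
        (MvPolynomial.aeval g : MvPolynomial (σ ⊕ Unit) ℚ →ₐ[ℚ] ℚ)
        (MvPolynomial.X (Sum.inr ())) q
      simp only [MvPolynomial.aeval_X] at h1
      have h2 : (MvPolynomial.aeval g : MvPolynomial (σ ⊕ Unit) ℚ →ₐ[ℚ] ℚ) T
          = MvPolynomial.eval g T := by
        rw [← MvPolynomial.coe_aeval_eq_eval]; rfl
      rw [← h2, hT, ← h1]
      exact congrFun (Polynomial.coe_aeval_eq_eval (g (Sum.inr ()))) q
    refine ⟨MvPolynomial.monomial u' a * T, fun x m => ?_⟩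
    rw [hsplit]
    simp only [map_mul, hTe, map_pow, MvPolynomial.eval_X]
    rw [hindep x (m+1) m]
    have hpt : pt x m (Sum.inr ()) = m := rfl
    have hpt1 : pt x (m+1) (Sum.inr ()) = m + 1 := rfl
    rw [hpt, hpt1, ← mul_sub, hqe m]




lemma IsPoly.integrate {σ : Type} {h : (σ → ℤ) → ℤ → ℤ}
    (hh : IsPoly (fun y : (σ ⊕ Unit) → ℤ => h (fun i => y (Sum.inl i)) (y (Sum.inr ()))))
    {f : (σ → ℤ) → ℤ → ℤ}
    (h0 : IsPoly (fun x : σ → ℤ => f x 0))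
    (hrec : ∀ x m, f x (m + 1) = f x m + h x m) :
    IsPoly (fun y : (σ ⊕ Unit) → ℤ => f (fun i => y (Sum.inl i)) (y (Sum.inr ()))) := by
  classical
  obtain ⟨P, hP⟩ := hh
  obtain ⟨Q, hQ⟩ := exists_antideriv P
  obtain ⟨p0, hp0⟩ := h0
  have hPe : ∀ (x : σ → ℤ) (m : ℤ), (h x m : ℚ)
      = MvPolynomial.eval (pt (fun i => (x i : ℚ)) (m : ℚ)) P := by
    intro x m
    have h := hP (Sum.elim x (fun _ => m))
    rw [show pt (fun i => (x i : ℚ)) (m : ℚ)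
        = (fun v => ((Sum.elim x (fun _ => m) v : ℤ) : ℚ)) from
      funext fun v => by
        cases v with
        | inl i => rfl
        | inr u => cases u; rfl]
    exact h
  have key : ∀ (x : σ → ℤ) (m : ℤ), (f x m : ℚ) = (f x 0 : ℚ)
      + (MvPolynomial.eval (pt (fun i => (x i : ℚ)) (m : ℚ)) Q
        - MvPolynomial.eval (pt (fun i => (x i : ℚ)) (0 : ℚ)) Q) := by
    intro x m
    induction m using Int.induction_on with
    | zero => simp
    | succ i hi =>
      have h1 := hrec x i
      have h2 := hQ (fun i => (x i : ℚ)) (i : ℚ)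
      have h3 := hPe x i
      rw [h1]
      push_cast at hi h2 h3 ⊢
      linarith
    | pred i hi =>
      have h1 := hrec x (-(i+1))
      have h2 := hQ (fun i => (x i : ℚ)) ((-(i+1) : ℤ) : ℚ)
      have h3 := hPe x (-(i+1))
      have he : (-(i+1) : ℤ) + 1 = -(i : ℤ) := by ring
      rw [he] at h1
      have he2 : ((-(i+1) : ℤ) : ℚ) + 1 = ((-(i : ℤ)) : ℚ) := by push_cast; ring
      rw [he2] at h2
      have hg : (-(i : ℤ) - 1 : ℤ) = -((i : ℤ) + 1) := by ring
      rw [hg]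
      rw [h1] at hi
      push_cast at hi h2 h3 ⊢
      linarith
  set sub0 : σ ⊕ Unit → MvPolynomial (σ ⊕ Unit) ℚ :=
    Sum.elim (fun i => MvPolynomial.X (Sum.inl i)) (fun _ => 0) with hsub0
  refine ⟨MvPolynomial.rename Sum.inl p0 + (Q - MvPolynomial.bind₁ sub0 Q), fun y => ?_⟩
  set x : σ → ℤ := fun i => y (Sum.inl i) with hx
  set m : ℤ := y (Sum.inr ()) with hm
  have hcy : (fun v => (y v : ℚ)) = pt (fun i => (x i : ℚ)) (m : ℚ) := by
    funext v
    rcases v with i | u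
    · rfl
    · cases u; rfl
  have e1 : MvPolynomial.eval (fun v => (y v : ℚ)) (MvPolynomial.rename Sum.inl p0)
      = ((f x 0 : ℤ) : ℚ) := by
    rw [MvPolynomial.eval_rename]
    exact (hp0 x).symm
  have e3 : MvPolynomial.eval (fun v => (y v : ℚ)) (MvPolynomial.bind₁ sub0 Q)
      = MvPolynomial.eval (pt (fun i => (x i : ℚ)) (0 : ℚ)) Q := by
    rw [MvPolynomial.eval, MvPolynomial.eval₂Hom_bind₁]
    apply MvPolynomial.eval₂Hom_congr rfl _ rfl
    funext v
    rcases v with i | u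
    · simp [hsub0, pt, hx]
    · cases u; simp [hsub0, pt]
  rw [map_add, map_sub, e1, e3, hcy]
  exact key x m



/-- The ordered product `g_1^{e_1} ⋯ g_n^{e_n}` taken in increasing order of indices. -/
def prodPow {Γ : Type*} [Group Γ] (n : ℕ) (g : Fin n → Γ) (e : Fin n → ℤ) : Γ :=
  ((List.finRange n).map fun k => g k ^ e k).prod

/-- The relators of the presented group `G(t)`:
`(a_i · a_j · a_{j+1}^{t_{i,j,j+1}} ⋯ a_n^{t_{i,j,n}})⁻¹ · (a_j · a_i)` for `1 ≤ i < j ≤ n`. -/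
def rels (n : ℕ) (t : Fin n → Fin n → Fin n → ℤ) : Set (FreeGroup (Fin n)) :=
  { r | ∃ i j : Fin n, i < j ∧
      r = (FreeGroup.of i * FreeGroup.of j *
            prodPow n FreeGroup.of (fun k => if j < k then t i j k else 0))⁻¹ *
          (FreeGroup.of j * FreeGroup.of i) }

/-- The presented group `G(t)` with generators `a_1, …, a_n` and relations
`a_j·a_i = a_i·a_j·a_{j+1}^{t_{i,j,j+1}} ⋯ a_n^{t_{i,j,n}}` for `1 ≤ i < j ≤ n`. -/
abbrev G (n : ℕ) (t : Fin n → Fin n → Fin n → ℤ) : Type := PresentedGroup (rels n t)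

/-- The generators `a_1, …, a_n` of `G(t)`. -/
def a (n : ℕ) (t : Fin n → Fin n → Fin n → ℤ) (i : Fin n) : G n t :=
  PresentedGroup.of i

/-- The normal form map `N_t : ℤⁿ → G(t)`, `x ↦ a_1^{x_1} ⋯ a_n^{x_n}`. -/
def N (n : ℕ) (t : Fin n → Fin n → Fin n → ℤ) (x : Fin n → ℤ) : G n t :=
  prodPow n (a n t) x

section GroupLemmas

variable {n : ℕ}

/-- Ordered product over an arbitrary index list. -/
def prodL {Γ : Type*} [Group Γ] (g : Fin n → Γ) (l : List (Fin n)) (e : Fin n → ℤ) : Γ :=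
  (l.map fun k => g k ^ e k).prod

variable {Γ : Type*} [Group Γ] {g : Fin n → Γ}

lemma prodL_append {l₁ l₂ : List (Fin n)} {e : Fin n → ℤ} :
    prodL g (l₁ ++ l₂) e = prodL g l₁ e * prodL g l₂ e := by
  simp [prodL]

lemma prodL_congr {l : List (Fin n)} {e e' : Fin n → ℤ} (h : ∀ k ∈ l, e k = e' k) :
    prodL g l e = prodL g l e' := by
  unfold prodL
  congr 1
  apply List.map_congr_left
  intro k hk
  rw [h k hk]

lemma prodL_eq_one {l : List (Fin n)} {e : Fin n → ℤ} (h : ∀ k ∈ l, e k = 0) :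
    prodL g l e = 1 := by
  apply List.prod_eq_one
  intro x hx
  obtain ⟨k, hk, rfl⟩ := List.mem_map.mp hx
  rw [h k hk, zpow_zero]

lemma prodPow_eq_prodL (e : Fin n → ℤ) : prodPow n g e = prodL g (List.finRange n) e := rfl

lemma mem_take_finRange {ℓ : ℕ} {k : Fin n} (h : k ∈ (List.finRange n).take ℓ) : (k : ℕ) < ℓ := by
  obtain ⟨j, hj, rfl⟩ := List.mem_iff_getElem.mp h
  have hj' : j < ℓ := by
    have := hj
    simp [List.length_take] at this
    omega
  simp [List.getElem_take]
  omega

lemma mem_drop_finRange {ℓ : ℕ} {k : Fin n} (h : k ∈ (List.finRange n).drop ℓ) : ℓ ≤ (k : ℕ) := by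
  obtain ⟨j, hj, rfl⟩ := List.mem_iff_getElem.mp h
  simp [List.getElem_drop]

/-- `mask ℓ y` keeps only the coordinates of index `≥ ℓ`. -/
def mask (ℓ : ℕ) (y : Fin n → ℤ) : Fin n → ℤ := fun k => if ℓ ≤ (k : ℕ) then y k else 0

/-- `lowmask ℓ y` keeps only the coordinates of index `< ℓ`. -/
def lowmask (ℓ : ℕ) (y : Fin n → ℤ) : Fin n → ℤ := fun k => if (k : ℕ) < ℓ then y k else 0

lemma mask_lt {ℓ : ℕ} {y : Fin n → ℤ} {k : Fin n} (h : (k : ℕ) < ℓ) : mask ℓ y k = 0 := by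
  simp only [mask]; rw [if_neg (by omega)]

lemma mask_le {ℓ : ℕ} {y : Fin n → ℤ} {k : Fin n} (h : ℓ ≤ (k : ℕ)) : mask ℓ y k = y k := by
  simp only [mask]; rw [if_pos h]

lemma lowmask_lt {ℓ : ℕ} {y : Fin n → ℤ} {k : Fin n} (h : (k : ℕ) < ℓ) : lowmask ℓ y k = y k := by
  simp only [lowmask]; rw [if_pos h]

lemma lowmask_le {ℓ : ℕ} {y : Fin n → ℤ} {k : Fin n} (h : ℓ ≤ (k : ℕ)) : lowmask ℓ y k = 0 := by
  simp only [lowmask]; rw [if_neg (by omega)]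

lemma prodPow_split (ℓ : ℕ) (e : Fin n → ℤ) :
    prodPow n g e = prodPow n g (lowmask ℓ e) * prodPow n g (mask ℓ e) := by
  have h1 : prodPow n g e
      = prodL g ((List.finRange n).take ℓ) e * prodL g ((List.finRange n).drop ℓ) e := by
    rw [prodPow_eq_prodL, ← prodL_append, List.take_append_drop]
  have h2 : prodPow n g (lowmask ℓ e) = prodL g ((List.finRange n).take ℓ) e := by
    rw [prodPow_eq_prodL, ← List.take_append_drop ℓ (List.finRange n), prodL_append,
      List.take_append_drop]
    rw [prodL_eq_one (l := (List.finRange n).drop ℓ)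
      (fun k hk => lowmask_le (mem_drop_finRange hk)), mul_one]
    exact prodL_congr fun k hk => lowmask_lt (mem_take_finRange hk)
  have h3 : prodPow n g (mask ℓ e) = prodL g ((List.finRange n).drop ℓ) e := by
    rw [prodPow_eq_prodL, ← List.take_append_drop ℓ (List.finRange n), prodL_append,
      List.take_append_drop]
    rw [prodL_eq_one (l := (List.finRange n).take ℓ)
      (fun k hk => mask_lt (mem_take_finRange hk)), one_mul]
    exact prodL_congr fun k hk => mask_le (mem_drop_finRange hk)
  rw [h1, h2, h3]

lemma prodPow_high {ℓ : ℕ} {e : Fin n → ℤ} (h : ∀ k : Fin n, (k : ℕ) < ℓ → e k = 0) :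
    prodPow n g e = prodL g ((List.finRange n).drop ℓ) e := by
  rw [prodPow_eq_prodL, ← List.take_append_drop ℓ (List.finRange n), prodL_append,
    List.take_append_drop]
  rw [prodL_eq_one (l := (List.finRange n).take ℓ) (fun k hk => h k (mem_take_finRange hk)),
    one_mul]

lemma drop_finRange_cons {ℓ : ℕ} (hℓ : ℓ < n) :
    (List.finRange n).drop ℓ = (⟨ℓ, hℓ⟩ : Fin n) :: (List.finRange n).drop (ℓ + 1) := by
  have hlen : ℓ < (List.finRange n).length := by simpa using hℓ
  rw [List.drop_eq_getElem_cons hlen]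
  congr 1
  simp

lemma prodPow_zero : prodPow n g (fun _ => 0) = 1 :=
  prodL_eq_one fun _ _ => rfl

end GroupLemmas


section Relations

variable {n : ℕ} {t : Fin n → Fin n → Fin n → ℤ}

lemma map_prodPow {Γ Δ : Type*} [Group Γ] [Group Δ] (f : Γ →* Δ) (g : Fin n → Γ)
    (e : Fin n → ℤ) : f (prodPow n g e) = prodPow n (fun k => f (g k)) e := by
  unfold prodPow
  rw [← List.prod_hom _ f, List.map_map]
  congr 1
  apply List.map_congr_left
  intro k _
  simp [Function.comp, map_zpow]

/-- The exponent vector of the tail of the relation for `i < j`. -/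
def tv (t : Fin n → Fin n → Fin n → ℤ) (i j : Fin n) : Fin n → ℤ :=
  fun k => if j < k then t i j k else 0

/-- The exponent vector of `a_j ⋅ (tail)`, i.e. the conjugate of `a_j` by `a_i`. -/
def tauv (t : Fin n → Fin n → Fin n → ℤ) (i j : Fin n) : Fin n → ℤ :=
  fun k => if k = j then 1 else tv t i j k

lemma rel_eq {i j : Fin n} (h : i < j) :
    a n t j * a n t i = a n t i * a n t j * N n t (tv t i j) := by
  have hr : ((FreeGroup.of i * FreeGroup.of j *
      prodPow n FreeGroup.of (fun k => if j < k then t i j k else 0))⁻¹ *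
      (FreeGroup.of j * FreeGroup.of i)) ∈ rels n t := ⟨i, j, h, rfl⟩
  have h1 : PresentedGroup.mk (rels n t) ((FreeGroup.of i * FreeGroup.of j *
      prodPow n FreeGroup.of (fun k => if j < k then t i j k else 0))⁻¹ *
      (FreeGroup.of j * FreeGroup.of i)) = 1 := by
    apply (QuotientGroup.eq_one_iff _).mpr
    exact Subgroup.subset_normalClosure hr
  rw [map_mul, map_inv] at h1
  have h2 := mul_eq_one_iff_inv_eq.mp h1
  rw [inv_inv] at h2
  have h3 : PresentedGroup.mk (rels n t) (FreeGroup.of i * FreeGroup.of j *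
      prodPow n FreeGroup.of (fun k => if j < k then t i j k else 0))
      = a n t i * a n t j * N n t (tv t i j) := by
    rw [map_mul, map_mul, map_prodPow]
    rfl
  have h4 : PresentedGroup.mk (rels n t) (FreeGroup.of j * FreeGroup.of i)
      = a n t j * a n t i := by rw [map_mul]; rfl
  rw [← h4, ← h2, h3]

lemma conj_gen {i j : Fin n} (h : i < j) :
    (a n t i)⁻¹ * a n t j * a n t i = a n t j * N n t (tv t i j) := by
  rw [mul_assoc, rel_eq h]
  group

lemma N_tauv {i j : Fin n} (h : i < j) :
    a n t j * N n t (tv t i j) = N n t (tauv t i j) := by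
  have h1 : N n t (tauv t i j) = prodL (a n t) ((List.finRange n).drop (j : ℕ)) (tauv t i j) :=
    prodPow_high fun k hk => by
      have hkj : ¬ k = j := by intro he; rw [he] at hk; omega
      have hjk : ¬ j < k := by rw [Fin.lt_def]; omega
      simp only [tauv, tv, if_neg hkj, if_neg hjk]
  have hj : (j : ℕ) < n := j.isLt
  rw [h1, drop_finRange_cons hj]
  have hjj : (⟨(j : ℕ), hj⟩ : Fin n) = j := by simp
  simp only [prodL, List.map_cons, List.prod_cons, hjj]
  have h2 : tauv t i j j = 1 := by simp [tauv]
  rw [h2, zpow_one]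
  congr 1
  have h3 : N n t (tv t i j) = prodL (a n t) ((List.finRange n).drop ((j : ℕ) + 1)) (tv t i j) :=
    prodPow_high fun k hk => by
      have hjk : ¬ j < k := by rw [Fin.lt_def]; omega
      simp only [tv, if_neg hjk]
  rw [h3]
  show prodL (a n t) (List.drop ((j : ℕ) + 1) (List.finRange n)) (tv t i j)
      = prodL (a n t) (List.drop ((j : ℕ) + 1) (List.finRange n)) (tauv t i j)
  apply prodL_congr
  intro k hk
  have hk' := mem_drop_finRange hk
  have hkj : ¬ k = j := by intro he; rw [he] at hk'; omega
  simp only [tauv, if_neg hkj]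

lemma conj_gen' {i j : Fin n} (h : i < j) :
    (a n t i)⁻¹ * a n t j * a n t i = N n t (tauv t i j) := by
  rw [conj_gen h, N_tauv h]

/-- The collected tail product `W`. -/
def Wg (t : Fin n → Fin n → Fin n → ℤ) (ℓ : Fin n) (m : ℕ) (u : Fin n → ℤ) : G n t :=
  (((List.finRange n).drop m).map fun j => N n t (tauv t ℓ j) ^ u j).prod

lemma conj_tail {ℓ : Fin n} (u : Fin n → ℤ) :
    (a n t ℓ)⁻¹ * N n t (mask ((ℓ : ℕ) + 1) u) * a n t ℓ = Wg t ℓ ((ℓ : ℕ) + 1) u := by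
  have h1 : N n t (mask ((ℓ : ℕ) + 1) u)
      = prodL (a n t) ((List.finRange n).drop ((ℓ : ℕ) + 1)) (mask ((ℓ : ℕ) + 1) u) :=
    prodPow_high fun k hk => mask_lt hk
  set φ : G n t →* G n t := (MulAut.conj (a n t ℓ)⁻¹).toMonoidHom with hφ
  have hconj : ∀ x : G n t, φ x = (a n t ℓ)⁻¹ * x * a n t ℓ := by
    intro x
    show (MulAut.conj (a n t ℓ)⁻¹) x = _
    rw [MulAut.conj_apply, inv_inv]
  calc (a n t ℓ)⁻¹ * N n t (mask ((ℓ : ℕ) + 1) u) * a n t ℓ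
      = φ (N n t (mask ((ℓ : ℕ) + 1) u)) := (hconj _).symm
    _ = Wg t ℓ ((ℓ : ℕ) + 1) u := by
        rw [h1]
        unfold prodL Wg
        rw [← List.prod_hom _ φ, List.map_map]
        congr 1
        apply List.map_congr_left
        intro k hk
        have hk' : (ℓ : ℕ) + 1 ≤ (k : ℕ) := mem_drop_finRange hk
        have hlk : ℓ < k := by rw [Fin.lt_def]; omega
        simp only [Function.comp]
        rw [map_zpow, hconj, mask_le hk', conj_gen' hlk]

/-- After pushing one `a_ℓ` through the tail: `N u ⋅ a_ℓ = N (lowstep ℓ u) ⋅ W`. -/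
def lowstep (ℓ : Fin n) (u : Fin n → ℤ) : Fin n → ℤ :=
  fun k => if (k : ℕ) < (ℓ : ℕ) + 1 then (if k = ℓ then u k + 1 else u k) else 0

lemma N_lowmask_mul_a {ℓ : Fin n} (u : Fin n → ℤ) :
    N n t (lowmask ((ℓ : ℕ) + 1) u) * a n t ℓ = N n t (lowstep ℓ u) := by
  have key : ∀ x : Fin n → ℤ, (∀ k : Fin n, (ℓ : ℕ) + 1 ≤ (k : ℕ) → x k = 0) →
      N n t x * a n t ℓ = N n t (fun k => if k = ℓ then x k + 1 else x k) := by
    intro x hx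
    have hsplit := prodPow_split (g := a n t) (ℓ : ℕ) x
    have hdropx : prodPow n (a n t) (mask (ℓ : ℕ) x)
        = prodL (a n t) ((List.finRange n).drop (ℓ : ℕ)) x := by
      rw [prodPow_high (e := mask (ℓ : ℕ) x) (fun k hk => mask_lt hk)]
      exact prodL_congr fun k hk => mask_le (mem_drop_finRange hk)
    have hcons := drop_finRange_cons ℓ.isLt
    have hℓfin : (⟨(ℓ : ℕ), ℓ.isLt⟩ : Fin n) = ℓ := by simp
    have htail : ∀ e : Fin n → ℤ, (∀ k : Fin n, (ℓ : ℕ) + 1 ≤ (k : ℕ) → e k = 0) →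
        prodL (a n t) ((List.finRange n).drop ((ℓ : ℕ) + 1)) e = 1 :=
      fun e he => prodL_eq_one fun k hk => he k (mem_drop_finRange hk)
    have hx1 : N n t x = prodPow n (a n t) (lowmask (ℓ : ℕ) x) * a n t ℓ ^ x ℓ := by
      show prodPow n (a n t) x = _
      rw [hsplit, hdropx, hcons]
      simp only [prodL, List.map_cons, List.prod_cons, hℓfin]
      rw [show (List.map (fun k => a n t k ^ x k) (List.drop ((ℓ : ℕ) + 1) (List.finRange n))).prod
          = prodL (a n t) (List.drop ((ℓ : ℕ) + 1) (List.finRange n)) x from rfl,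
        htail x hx, mul_one]
    set x' : Fin n → ℤ := fun k => if k = ℓ then x k + 1 else x k with hx'
    have hsplit' := prodPow_split (g := a n t) (ℓ : ℕ) x'
    have hdropx' : prodPow n (a n t) (mask (ℓ : ℕ) x')
        = prodL (a n t) ((List.finRange n).drop (ℓ : ℕ)) x' := by
      rw [prodPow_high (e := mask (ℓ : ℕ) x') (fun k hk => mask_lt hk)]
      exact prodL_congr fun k hk => mask_le (mem_drop_finRange hk)
    have hx2 : N n t x' = prodPow n (a n t) (lowmask (ℓ : ℕ) x') * a n t ℓ ^ (x ℓ + 1) := by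
      show prodPow n (a n t) x' = _
      rw [hsplit', hdropx', hcons]
      simp only [prodL, List.map_cons, List.prod_cons, hℓfin]
      rw [show (List.map (fun k => a n t k ^ x' k) (List.drop ((ℓ : ℕ) + 1) (List.finRange n))).prod
          = prodL (a n t) (List.drop ((ℓ : ℕ) + 1) (List.finRange n)) x' from rfl,
        htail x' (fun k hk => by
          simp only [hx']
          rw [if_neg (by intro he; subst he; omega)]
          exact hx k hk), mul_one]
      congr 2
      simp [hx']
    have hlow : lowmask (ℓ : ℕ) x' = lowmask (ℓ : ℕ) x := by
      funext k
      simp only [lowmask, hx']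
      by_cases hkl : (k : ℕ) < (ℓ : ℕ)
      · rw [if_pos hkl, if_pos hkl, if_neg (by intro he; subst he; omega)]
      · rw [if_neg hkl, if_neg hkl]
    rw [hx1, hx2, hlow, mul_assoc, ← zpow_add_one]
  have h1 := key (lowmask ((ℓ : ℕ) + 1) u) (fun k hk => lowmask_le hk)
  rw [h1]
  have hfun : (fun k => if k = ℓ then lowmask ((ℓ : ℕ) + 1) u k + 1
      else lowmask ((ℓ : ℕ) + 1) u k) = lowstep ℓ u := by
    funext k
    by_cases hkl : k = ℓ
    · rw [if_pos hkl, hkl, lowmask_lt (by omega)]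
      simp only [lowstep]
      simp
    · rw [if_neg hkl]
      simp only [lowstep]
      by_cases hk2 : (k : ℕ) < (ℓ : ℕ) + 1
      · rw [lowmask_lt hk2, if_pos hk2, if_neg hkl]
      · rw [lowmask_le (by omega), if_neg hk2]
  rw [hfun]

lemma G_step {ℓ : Fin n} (u : Fin n → ℤ) :
    N n t u * a n t ℓ = N n t (lowstep ℓ u) * Wg t ℓ ((ℓ : ℕ) + 1) u := by
  have h1 : N n t u = N n t (lowmask ((ℓ : ℕ) + 1) u) * N n t (mask ((ℓ : ℕ) + 1) u) :=
    prodPow_split _ _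
  rw [h1, mul_assoc]
  have h2 : N n t (mask ((ℓ : ℕ) + 1) u) * a n t ℓ
      = a n t ℓ * Wg t ℓ ((ℓ : ℕ) + 1) u := by
    rw [← conj_tail]
    group
  rw [h2, ← mul_assoc, N_lowmask_mul_a]

lemma N_mask_cons {ℓ : ℕ} (hℓ : ℓ < n) (y : Fin n → ℤ) :
    N n t (mask ℓ y) = a n t ⟨ℓ, hℓ⟩ ^ (y ⟨ℓ, hℓ⟩) * N n t (mask (ℓ + 1) y) := by
  have h1 : N n t (mask ℓ y) = prodL (a n t) ((List.finRange n).drop ℓ) (mask ℓ y) :=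
    prodPow_high fun k hk => mask_lt hk
  have h2 : N n t (mask (ℓ + 1) y)
      = prodL (a n t) ((List.finRange n).drop (ℓ + 1)) (mask (ℓ + 1) y) :=
    prodPow_high fun k hk => mask_lt hk
  rw [h1, h2, drop_finRange_cons hℓ]
  simp only [prodL, List.map_cons, List.prod_cons]
  congr 1
  · congr 1
    exact mask_le (by simp)
  · congr 1
    apply List.map_congr_left
    intro k hk
    have hk' := mem_drop_finRange hk
    rw [mask_le (by omega), mask_le (by omega)]

lemma N_zero : N n t (fun _ => 0) = 1 := prodPow_zero

lemma Wg_cons {ℓ : Fin n} {m : ℕ} (hm : m < n) (u : Fin n → ℤ) :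
    Wg t ℓ m u = N n t (tauv t ℓ ⟨m, hm⟩) ^ u ⟨m, hm⟩ * Wg t ℓ (m + 1) u := by
  unfold Wg
  rw [drop_finRange_cons hm]
  simp only [List.map_cons, List.prod_cons]

lemma Wg_nil {ℓ : Fin n} {m : ℕ} (hm : n ≤ m) (u : Fin n → ℤ) : Wg t ℓ m u = 1 := by
  unfold Wg
  rw [List.drop_eq_nil_of_le (by simpa using hm)]
  simp

end Relations


section Master

variable {n : ℕ} {t : Fin n → Fin n → Fin n → ℤ}

lemma fin_strongInduction {P : Fin n → Prop}
    (h : ∀ k : Fin n, (∀ j : Fin n, j < k → P j) → P k) : ∀ k, P k := by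
  have key : ∀ K : ℕ, ∀ k : Fin n, (k : ℕ) < K → P k := by
    intro K
    induction K with
    | zero => intro k hk; omega
    | succ K ih =>
      intro k _
      apply h
      intro j hj
      apply ih
      rw [Fin.lt_def] at hj
      omega
  exact fun k => key ((k : ℕ) + 1) k (by omega)

/-- Coordinates of a group element with respect to the normal form. -/
noncomputable def cof (hN : Function.Bijective (N n t)) (g : G n t) : Fin n → ℤ :=
  (Equiv.ofBijective _ hN).symm g

variable (hN : Function.Bijective (N n t))

lemma cof_N (x : Fin n → ℤ) : cof hN (N n t x) = x :=
  (Equiv.ofBijective _ hN).symm_apply_apply x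

lemma N_cof (g : G n t) : N n t (cof hN g) = g :=
  (Equiv.ofBijective _ hN).apply_symm_apply g

lemma cof_one : cof hN (1 : G n t) = fun _ => 0 := by
  rw [← N_zero, cof_N]

/-- Coordinates of `N x ⋅ N (mask ℓ y)`. -/
noncomputable def Mull (ℓ : ℕ) (x y : Fin n → ℤ) : Fin n → ℤ :=
  cof hN (N n t x * N n t (mask ℓ y))

/-- The correction term in coordinate `k` for `Mull ℓ`. -/
noncomputable def phiM (ℓ : ℕ) (k : Fin n) (v : Fin n ⊕ Fin n → ℤ) : ℤ :=
  Mull hN ℓ (fun j => v (Sum.inl j)) (fun j => v (Sum.inr j)) k - v (Sum.inl k) - v (Sum.inr k)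

/-- Dependence only on the coordinates `< k` in both blocks. -/
def Below2 (k : Fin n) (φ : (Fin n ⊕ Fin n → ℤ) → ℤ) : Prop :=
  ∀ v w : Fin n ⊕ Fin n → ℤ,
    (∀ j : Fin n, j < k → v (Sum.inl j) = w (Sum.inl j)) →
    (∀ j : Fin n, j < k → v (Sum.inr j) = w (Sum.inr j)) → φ v = φ w

/-- Dependence only on the coordinates `< k`. -/
def Below1 (k : Fin n) (ψ : (Fin n → ℤ) → ℤ) : Prop :=
  ∀ u u' : Fin n → ℤ, (∀ j : Fin n, j < k → u j = u' j) → ψ u = ψ u'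

/-- The master inductive statement: triangular shape with polynomial corrections for
multiplication by normal words supported on indices `≥ ℓ`. -/
def ShapeS (ℓ : ℕ) : Prop :=
  (∀ (x y : Fin n → ℤ) (k : Fin n), (k : ℕ) < ℓ → Mull hN ℓ x y k = x k) ∧
  (∀ k : Fin n, ℓ ≤ (k : ℕ) → IsPoly (phiM hN ℓ k) ∧ Below2 k (phiM hN ℓ k))

lemma Mull_eq (ℓ : ℕ) (x y : Fin n → ℤ) (k : Fin n) :
    Mull hN ℓ x y k = x k + y k + phiM hN ℓ k (Sum.elim x y) := by
  show Mull hN ℓ x y k = x k + y k +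
    (Mull hN ℓ (fun j => Sum.elim x y (Sum.inl j)) (fun j => Sum.elim x y (Sum.inr j)) k
      - Sum.elim x y (Sum.inl k) - Sum.elim x y (Sum.inr k))
  simp only [Sum.elim_inl, Sum.elim_inr]
  ring

lemma Mull_zero (ℓ : ℕ) (k : Fin n) : Mull hN ℓ (fun _ => 0) (fun _ => 0) k = 0 := by
  unfold Mull
  have h1 : (mask ℓ (fun _ => (0 : ℤ)) : Fin n → ℤ) = fun _ => (0 : ℤ) := by
    funext j
    simp [mask]
  rw [h1, N_zero, one_mul, cof_one]

lemma phiM_zero_of_low (ℓ : ℕ) (k : Fin n) (hk : ℓ ≤ (k : ℕ)) (hB : Below2 k (phiM hN ℓ k))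
    (v : Fin n ⊕ Fin n → ℤ)
    (h1 : ∀ j : Fin n, j < k → v (Sum.inl j) = 0)
    (h2 : ∀ j : Fin n, j < k → v (Sum.inr j) = 0) : phiM hN ℓ k v = 0 := by
  have := hB v (Sum.elim (fun _ => 0) (fun _ => 0)) (fun j hj => by simpa using h1 j hj)
    (fun j hj => by simpa using h2 j hj)
  rw [this]
  have h4 : phiM hN ℓ k (Sum.elim (fun _ => (0:ℤ)) (fun _ => (0:ℤ)))
      = Mull hN ℓ (fun _ => 0) (fun _ => 0) k - 0 - 0 := rfl
  rw [h4, Mull_zero hN ℓ k]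
  ring

lemma shape_top (ℓ : ℕ) (hℓ : n ≤ ℓ) : ShapeS hN ℓ := by
  constructor
  · intro x y k _
    unfold Mull
    have h1 : mask ℓ y = fun _ => (0 : ℤ) := by
      funext j
      exact mask_lt (lt_of_lt_of_le j.isLt hℓ)
    rw [h1, N_zero, mul_one, cof_N]
  · intro k hk
    exact absurd (lt_of_lt_of_le k.isLt hℓ) (by omega)

/-- Coordinates of powers of a fixed element. -/
noncomputable def pwc (v : Fin n → ℤ) (m : ℤ) : Fin n → ℤ := cof hN (N n t v ^ m)

section PW

variable {L : ℕ} (hS : ShapeS hN L) {j : Fin n} (hLj : L ≤ (j : ℕ)) {τ : Fin n → ℤ}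
  (hτlow : ∀ k : Fin n, k < j → τ k = 0) (hτj : τ j = 1)

include hS hLj hτlow

lemma pw_mask : mask L τ = τ := by
  funext k
  by_cases hk : L ≤ (k : ℕ)
  · exact mask_le hk
  · rw [mask_lt (by omega)]
    exact (hτlow k (by rw [Fin.lt_def]; omega)).symm

lemma pw_zero : pwc hN τ 0 = fun _ => 0 := by
  unfold pwc
  rw [zpow_zero, cof_one]

lemma pw_rec (m : ℤ) : pwc hN τ (m + 1) = Mull hN L (pwc hN τ m) τ := by
  unfold Mull
  rw [pw_mask hN hS hLj hτlow]
  unfold pwc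
  rw [N_cof, ← zpow_add_one]

lemma pw_low : ∀ m : ℤ, ∀ k : Fin n, k < j → pwc hN τ m k = 0 := by
  have stepF : ∀ m : ℤ, (∀ k : Fin n, k < j → pwc hN τ m k = 0) →
      ∀ k : Fin n, k < j → pwc hN τ (m + 1) k = 0 := by
    intro m hm k hk
    rw [pw_rec hN hS hLj hτlow]
    rcases lt_or_ge (k : ℕ) L with hkL | hkL
    · rw [hS.1 _ _ _ hkL]
      exact hm k hk
    · rw [Mull_eq, hm k hk, hτlow k hk,
        phiM_zero_of_low hN L k hkL (hS.2 k hkL).2 _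
          (fun j' hj' => by simpa using hm j' (lt_trans hj' hk))
          (fun j' hj' => by simpa using hτlow j' (lt_trans hj' hk))]
      ring
  have stepB : ∀ m : ℤ, (∀ k : Fin n, k < j → pwc hN τ (m + 1) k = 0) →
      ∀ k : Fin n, k < j → pwc hN τ m k = 0 := by
    intro m hm
    have key : ∀ k : Fin n, (∀ j' : Fin n, j' < k → (j' < j → pwc hN τ m j' = 0)) →
        (k < j → pwc hN τ m k = 0) := by
      intro k ih hk
      rcases lt_or_ge (k : ℕ) L with hkL | hkL
      · have h1 := hm k hk
        rw [pw_rec hN hS hLj hτlow, hS.1 _ _ _ hkL] at h1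
        exact h1
      · have h1 := hm k hk
        rw [pw_rec hN hS hLj hτlow, Mull_eq, hτlow k hk,
          phiM_zero_of_low hN L k hkL (hS.2 k hkL).2 _
            (fun j' hj' => by simpa using ih j' hj' (lt_trans hj' hk))
            (fun j' hj' => by simpa using hτlow j' (lt_trans hj' hk))] at h1
        omega
    exact fun k => fin_strongInduction (P := fun k => k < j → pwc hN τ m k = 0) key k
  intro m
  induction m using Int.induction_on with
  | zero => intro k _; rw [pw_zero hN hS hLj hτlow]
  | succ i hi => exact stepF i hi
  | pred i hi =>
    apply stepB
    intro k hk
    rw [show (-(i : ℤ) - 1 + 1) = -(i : ℤ) by ring]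
    exact hi k hk

include hτj

lemma pw_diag : ∀ m : ℤ, pwc hN τ m j = m := by
  have hLj' : L ≤ (j : ℕ) := hLj
  have hstep : ∀ m : ℤ, pwc hN τ (m + 1) j = pwc hN τ m j + 1 := by
    intro m
    rw [pw_rec hN hS hLj hτlow, Mull_eq, hτj,
      phiM_zero_of_low hN L j hLj' (hS.2 j hLj').2 _
        (fun j' hj' => by simpa using pw_low hN hS hLj hτlow m j' hj')
        (fun j' hj' => by simpa using hτlow j' hj')]
    ring
  intro m
  induction m using Int.induction_on with
  | zero => rw [pw_zero hN hS hLj hτlow]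
  | succ i hi => rw [hstep, hi]
  | pred i hi =>
    have := hstep (-(i : ℤ) - 1)
    rw [show (-(i : ℤ) - 1 + 1) = -(i : ℤ) by ring] at this
    omega

lemma pw_poly : ∀ k : Fin n,
    IsPoly (fun y : (Fin n ⊕ Unit) → ℤ => pwc hN τ (y (Sum.inr ())) k) := by
  apply fin_strongInduction
  intro k ih
  rcases lt_trichotomy k j with hkj | hkj | hkj
  · exact (IsPoly.const 0).congr
      (fun y => (pw_low hN hS hLj hτlow (y (Sum.inr ())) k hkj).symm)
  · subst hkj
    exact (IsPoly.proj (Sum.inr ())).congr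
      (fun y => (pw_diag hN hS hLj hτlow hτj (y (Sum.inr ()))).symm)
  · have hkL : L ≤ (k : ℕ) := le_trans hLj (by rw [Fin.lt_def] at hkj; omega)
    classical
    set g : (Fin n ⊕ Fin n) → ((Fin n ⊕ Unit) → ℤ) → ℤ := fun w =>
      match w with
      | Sum.inl j' => if j' < k then (fun y => pwc hN τ (y (Sum.inr ())) j') else (fun _ => 0)
      | Sum.inr j' => fun _ => τ j' with hg
    have hgP : ∀ w, IsPoly (g w) := by
      intro w
      rcases w with j' | j'
      · by_cases hj' : j' < k
        · simpa [hg, hj'] using ih j' hj'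
        · simpa [hg, hj'] using IsPoly.const 0
      · exact IsPoly.const (τ j')
    have hh : IsPoly (fun y : (Fin n ⊕ Unit) → ℤ =>
        τ k + phiM hN L k (fun w => g w y)) :=
      (IsPoly.const (τ k)).add (((hS.2 k hkL).1).comp g hgP)
    apply (IsPoly.integrate (σ := Fin n) (h := fun _ m =>
        τ k + phiM hN L k (fun w => g w (Sum.elim (fun _ => 0) (fun _ => m))))
      (f := fun _ m => pwc hN τ m k) ?_ ?_ ?_).congr (fun y => rfl)
    · apply hh.congr
      intro y
      congr 1
      apply (hS.2 k hkL).2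
      · intro j' hj'
        simp only [hg, if_pos hj']
        rfl
      · intro j' _
        simp only [hg]
    · exact (IsPoly.const 0).congr (fun x => by
        show (0 : ℤ) = pwc hN τ 0 k
        rw [pw_zero hN hS hLj hτlow])
    · intro x m
      show pwc hN τ (m + 1) k = pwc hN τ m k
        + (τ k + phiM hN L k fun w => g w (Sum.elim (fun _ => 0) (fun _ => m)))
      rw [pw_rec hN hS hLj hτlow, Mull_eq]
      have harg : phiM hN L k (Sum.elim (pwc hN τ m) τ)
          = phiM hN L k (fun w => g w (Sum.elim (fun _ => (0:ℤ)) (fun _ => m))) := by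
        apply (hS.2 k hkL).2
        · intro j' hj'
          simp only [hg, Sum.elim_inl, if_pos hj']
          rfl
        · intro j' _
          simp only [hg, Sum.elim_inr]
      rw [harg]
      ring

end PW


section WSec

/-- Coordinates of the collected tail product. -/
noncomputable def Wcf (ℓf : Fin n) (m : ℕ) (u : Fin n → ℤ) : Fin n → ℤ :=
  cof hN (Wg t ℓf m u)

/-- The inductive property of tail products. -/
def Wprop (ℓf : Fin n) (m : ℕ) : Prop :=
  (∀ (u : Fin n → ℤ) (k : Fin n), (k : ℕ) < m → Wcf hN ℓf m u k = 0) ∧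
  (∀ k : Fin n, m ≤ (k : ℕ) → ∃ ψ : (Fin n → ℤ) → ℤ, IsPoly ψ ∧ Below1 k ψ ∧
    ∀ u, Wcf hN ℓf m u k = u k + ψ u)

lemma Wprop_top (ℓf : Fin n) (m : ℕ) (hm : n ≤ m) : Wprop hN ℓf m := by
  constructor
  · intro u k _
    unfold Wcf
    rw [Wg_nil hm, cof_one]
  · intro k hk
    exact absurd (lt_of_lt_of_le k.isLt (le_trans hm hk)) (by omega)

lemma W_main (ℓf : Fin n) (hS : ShapeS hN ((ℓf : ℕ) + 1)) :
    ∀ m : ℕ, (ℓf : ℕ) < m → Wprop hN ℓf m := by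
  classical
  set L : ℕ := (ℓf : ℕ) + 1 with hL
  have key : ∀ d m : ℕ, n ≤ m + d → (ℓf : ℕ) < m → Wprop hN ℓf m := by
    intro d
    induction d with
    | zero => exact fun m hm _ => Wprop_top hN ℓf m (by omega)
    | succ d ih =>
      intro m hnm hℓm
      rcases le_or_gt n m with hm | hm
      · exact Wprop_top hN ℓf m hm
      · have IH : Wprop hN ℓf (m + 1) := ih (m + 1) (by omega) (by omega)
        set mfin : Fin n := ⟨m, hm⟩ with hmfin
        have hmval : (mfin : ℕ) = m := rfl
        set τ : Fin n → ℤ := tauv t ℓf mfin with hτ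
        have hτlow : ∀ k : Fin n, k < mfin → τ k = 0 := by
          intro k hk
          rw [Fin.lt_def] at hk
          simp only [hτ, tauv, tv]
          rw [if_neg (by intro he; rw [he] at hk; omega),
            if_neg (by rw [Fin.lt_def]; omega)]
        have hτj : τ mfin = 1 := by simp [hτ, tauv]
        have hLj : L ≤ (mfin : ℕ) := by simp [hL, hmfin]; omega
        have hrecW : ∀ u, Wcf hN ℓf m u
            = Mull hN L (pwc hN τ (u mfin)) (Wcf hN ℓf (m + 1) u) := by
          intro u
          have hmask : mask L (Wcf hN ℓf (m + 1) u) = Wcf hN ℓf (m + 1) u := by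
            funext k
            by_cases hk : L ≤ (k : ℕ)
            · exact mask_le hk
            · rw [mask_lt (by omega), IH.1 u k (by omega)]
          unfold Mull
          rw [hmask]
          unfold Wcf pwc
          rw [N_cof, N_cof, ← Wg_cons hm]
        have hlow1 : ∀ (u : Fin n → ℤ) (k : Fin n), (k : ℕ) < m → Wcf hN ℓf m u k = 0 := by
          intro u k hk
          have hkm : k < mfin := by rw [Fin.lt_def]; exact hk
          rcases lt_or_ge (k : ℕ) L with hkL | hkL
          · rw [hrecW, hS.1 _ _ _ hkL]
            exact pw_low hN hS hLj hτlow (u mfin) k hkm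
          · rw [hrecW, Mull_eq, pw_low hN hS hLj hτlow (u mfin) k hkm,
              IH.1 u k (by omega),
              phiM_zero_of_low hN L k hkL (hS.2 k hkL).2 _
                (fun j' hj' => by
                  simpa using pw_low hN hS hLj hτlow (u mfin) j' (lt_trans hj' hkm))
                (fun j' hj' => by
                  simpa using IH.1 u j' (by rw [Fin.lt_def] at hj'; omega))]
            ring
        refine ⟨hlow1, ?_⟩
        intro k hk
        have hkL : L ≤ (k : ℕ) := by omega
        refine ⟨fun u => Wcf hN ℓf m u k - u k, ?_, ?_, fun u => by ring⟩
        · -- IsPoly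
          choose ψf hψfP hψfB hψfE using fun (k' : Fin n) (h : m + 1 ≤ (k' : ℕ)) => IH.2 k' h
          have hform : ∀ u, Wcf hN ℓf m u k = pwc hN τ (u mfin) k + Wcf hN ℓf (m + 1) u k
              + phiM hN L k (Sum.elim (pwc hN τ (u mfin)) (Wcf hN ℓf (m + 1) u)) := by
            intro u
            rw [hrecW, Mull_eq]
          rcases eq_or_lt_of_le hk with hkm | hkm
          · -- k = mfin : the correction vanishes
            have hkfin : k = mfin := by rw [hmfin]; exact Fin.ext hkm.symm
            apply (IsPoly.const 0).congr
            intro u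
            rw [hform u, hkfin, pw_diag hN hS hLj hτlow hτj,
              IH.1 u mfin (by omega),
              phiM_zero_of_low hN L mfin (by omega) (hS.2 mfin (by omega)).2 _
                (fun j' hj' => by simpa using pw_low hN hS hLj hτlow (u mfin) j' hj')
                (fun j' hj' => by
                  simpa using IH.1 u j' (by rw [Fin.lt_def] at hj'; omega))]
            ring
          · -- m < k
            have hmk : mfin < k := by rw [Fin.lt_def]; exact hkm
            have hψ'E := hψfE k (by omega : m + 1 ≤ (k : ℕ))
            set gW : (Fin n ⊕ Fin n) → (Fin n → ℤ) → ℤ := fun w =>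
              match w with
              | Sum.inl j' => if j' < k then (fun u => pwc hN τ (u mfin) j') else fun _ => 0
              | Sum.inr j' => if j' < k then
                  (if h : m + 1 ≤ (j' : ℕ) then (fun u => u j' + ψf j' h u) else fun _ => 0)
                  else fun _ => 0 with hgW
            have hgWP : ∀ w, IsPoly (gW w) := by
              intro w
              rcases w with j' | j'
              · by_cases hj' : j' < k
                · simp only [hgW, if_pos hj']
                  exact ((pw_poly hN hS hLj hτlow hτj j').comp
                    (fun w' => match w' with
                      | Sum.inl _ => fun _ => 0
                      | Sum.inr _ => fun u => u mfin)
                    (fun w' => by rcases w' with _ | _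
                                  · exact IsPoly.const 0
                                  · exact IsPoly.proj mfin)).congr (fun u => rfl)
                · simp only [hgW, if_neg hj']
                  exact IsPoly.const 0
              · by_cases hj' : j' < k
                · simp only [hgW, if_pos hj']
                  by_cases h : m + 1 ≤ (j' : ℕ)
                  · simp only [dif_pos h]
                    exact (IsPoly.proj j').add (hψfP j' h)
                  · simp only [dif_neg h]
                    exact IsPoly.const 0
                · simp only [hgW, if_neg hj']
                  exact IsPoly.const 0
            have hBig : IsPoly (fun u : Fin n → ℤ =>
                pwc hN τ (u mfin) k + ψf k (by omega) u
                  + phiM hN L k (fun w => gW w u)) := by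
              apply IsPoly.add
              apply IsPoly.add
              · exact ((pw_poly hN hS hLj hτlow hτj k).comp
                  (fun w' => match w' with
                    | Sum.inl _ => fun _ => 0
                    | Sum.inr _ => fun u => u mfin)
                  (fun w' => by rcases w' with _ | _
                                · exact IsPoly.const 0
                                · exact IsPoly.proj mfin)).congr (fun u => rfl)
              · exact hψfP k (by omega)
              · exact ((hS.2 k hkL).1).comp gW hgWP
            apply hBig.congr
            intro u
            have harg : phiM hN L k (fun w => gW w u)
                = phiM hN L k (Sum.elim (pwc hN τ (u mfin)) (Wcf hN ℓf (m + 1) u)) := by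
              apply (hS.2 k hkL).2
              · intro j' hj'
                simp only [hgW, if_pos hj', Sum.elim_inl]
              · intro j' hj'
                simp only [hgW, if_pos hj', Sum.elim_inr]
                by_cases h : m + 1 ≤ (j' : ℕ)
                · simp only [dif_pos h]
                  exact (hψfE j' h u).symm
                · simp only [dif_neg h]
                  exact (IH.1 u j' (by omega)).symm
            rw [harg, hform u, hψ'E u]
            ring
        · -- Below1
          intro u u' hagree
          have hform : ∀ v, Wcf hN ℓf m v k = pwc hN τ (v mfin) k + Wcf hN ℓf (m + 1) v k
              + phiM hN L k (Sum.elim (pwc hN τ (v mfin)) (Wcf hN ℓf (m + 1) v)) := by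
            intro v
            rw [hrecW, Mull_eq]
          have hmfk : mfin < k ∨ mfin = k := by
            rcases eq_or_lt_of_le hk with h | h
            · exact Or.inr (Fin.ext h)
            · exact Or.inl (by rw [Fin.lt_def]; exact h)
          have humf : u mfin = u' mfin ∨ mfin = k := by
            rcases hmfk with h | h
            · exact Or.inl (hagree mfin h)
            · exact Or.inr h
          choose ψf hψfP hψfB hψfE using fun (k' : Fin n) (h : m + 1 ≤ (k' : ℕ)) => IH.2 k' h
          have hWagree : ∀ j' : Fin n, j' < k → Wcf hN ℓf (m + 1) u j' = Wcf hN ℓf (m + 1) u' j' := by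
            intro j' hj'
            by_cases h : m + 1 ≤ (j' : ℕ)
            · rw [hψfE j' h, hψfE j' h, hagree j' hj',
                hψfB j' h u u' (fun j'' hj'' => hagree j'' (lt_trans hj'' hj'))]
            · rw [IH.1 u j' (by omega), IH.1 u' j' (by omega)]
          rcases hmfk with hmfklt | hmfkeq
          · have hum : u mfin = u' mfin := hagree mfin hmfklt
            show Wcf hN ℓf m u k - u k = Wcf hN ℓf m u' k - u' k
            rw [hform u, hform u', hum]
            have hWk : Wcf hN ℓf (m + 1) u k - u k = Wcf hN ℓf (m + 1) u' k - u' k := by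
              rw [hψfE k (by omega), hψfE k (by omega),
                hψfB k (by omega) u u' (fun j'' hj'' => hagree j'' hj'')]
              ring
            have hphi : phiM hN L k (Sum.elim (pwc hN τ (u' mfin)) (Wcf hN ℓf (m + 1) u))
                = phiM hN L k (Sum.elim (pwc hN τ (u' mfin)) (Wcf hN ℓf (m + 1) u')) := by
              apply (hS.2 k hkL).2
              · intro j' _
                rfl
              · intro j' hj'
                simpa using hWagree j' hj'
            rw [hphi]
            omega
          · -- mfin = k : both sides are zero
            subst hmfkeq
            have hzero : ∀ v : Fin n → ℤ, Wcf hN ℓf m v mfin - v mfin = 0 := by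
              intro v
              rw [hform v, pw_diag hN hS hLj hτlow hτj,
                IH.1 v mfin (by omega),
                phiM_zero_of_low hN L mfin (by omega) (hS.2 mfin (by omega)).2 _
                  (fun j' hj' => by simpa using pw_low hN hS hLj hτlow (v mfin) j' hj')
                  (fun j' hj' => by
                    simpa using IH.1 v j' (by rw [Fin.lt_def] at hj'; omega))]
              ring
            show Wcf hN ℓf m u mfin - u mfin = Wcf hN ℓf m u' mfin - u' mfin
            rw [show Wcf hN ℓf m u mfin - u mfin = 0 from hzero u,
              show Wcf hN ℓf m u' mfin - u' mfin = 0 from hzero u']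
  exact fun m hm => key n m (by omega) hm

end WSec


section PSec

/-- Coordinates of `N x ⋅ a_ℓ^s`. -/
noncomputable def Pcf (ℓf : Fin n) (x : Fin n → ℤ) (s : ℤ) : Fin n → ℤ :=
  cof hN (N n t x * a n t ℓf ^ s)

lemma lowstep_low {ℓf k : Fin n} (u : Fin n → ℤ) (hk : (k : ℕ) < (ℓf : ℕ)) :
    lowstep ℓf u k = u k := by
  simp only [lowstep]
  rw [if_pos (by omega), if_neg (by intro he; rw [he] at hk; omega)]

lemma lowstep_self {ℓf : Fin n} (u : Fin n → ℤ) : lowstep ℓf u ℓf = u ℓf + 1 := by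
  simp only [lowstep]
  simp

lemma lowstep_high {ℓf k : Fin n} (u : Fin n → ℤ) (hk : (ℓf : ℕ) < (k : ℕ)) :
    lowstep ℓf u k = 0 := by
  simp only [lowstep]
  rw [if_neg (by omega)]

lemma lowstep_poly (ℓf k : Fin n) : IsPoly (fun u : Fin n → ℤ => lowstep ℓf u k) := by
  rcases lt_trichotomy ((k : ℕ)) ((ℓf : ℕ)) with h | h | h
  · exact (IsPoly.proj k).congr (fun u => (lowstep_low u h).symm)
  · have hk : k = ℓf := Fin.ext h
    subst hk
    exact ((IsPoly.proj k).add (IsPoly.const 1)).congr (fun u => (lowstep_self u).symm)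
  · exact (IsPoly.const 0).congr (fun u => (lowstep_high u h).symm)

lemma P_main (ℓf : Fin n) (hS : ShapeS hN ((ℓf : ℕ) + 1)) :
    (∀ x s (k : Fin n), (k : ℕ) < (ℓf : ℕ) → Pcf hN ℓf x s k = x k) ∧
    (∀ x s, Pcf hN ℓf x s ℓf = x ℓf + s) ∧
    (∀ k : Fin n,
      (∀ x x' s, (∀ j : Fin n, j < k → x j = x' j) →
        Pcf hN ℓf x s k - x k = Pcf hN ℓf x' s k - x' k) ∧
      IsPoly (fun y : (Fin n ⊕ Unit) → ℤ =>
        Pcf hN ℓf (fun i => y (Sum.inl i)) (y (Sum.inr ())) k)) := by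
  classical
  set L : ℕ := (ℓf : ℕ) + 1 with hL
  have hWp : Wprop hN ℓf L := W_main hN ℓf hS L (by omega)
  choose ψf hψfP hψfB hψfE using fun (k' : Fin n) (h : L ≤ (k' : ℕ)) => hWp.2 k' h
  have hP0 : ∀ x, Pcf hN ℓf x 0 = x := by
    intro x
    unfold Pcf
    rw [zpow_zero, mul_one, cof_N]
  have hPrec : ∀ x s, Pcf hN ℓf x (s + 1)
      = Mull hN L (lowstep ℓf (Pcf hN ℓf x s)) (Wcf hN ℓf L (Pcf hN ℓf x s)) := by
    intro x s
    have hmask : mask L (Wcf hN ℓf L (Pcf hN ℓf x s)) = Wcf hN ℓf L (Pcf hN ℓf x s) := by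
      funext k
      by_cases hk : L ≤ (k : ℕ)
      · exact mask_le hk
      · rw [mask_lt (by omega), hWp.1 _ k (by omega)]
    unfold Mull
    rw [hmask]
    unfold Wcf Pcf
    rw [N_cof, ← G_step, N_cof, zpow_add_one, ← mul_assoc]
  -- coordinates of the one-step map
  have hstep_low : ∀ u (k : Fin n), (k : ℕ) < (ℓf : ℕ) →
      Mull hN L (lowstep ℓf u) (Wcf hN ℓf L u) k = u k := by
    intro u k hk
    have hkL' : (k : ℕ) < L := by omega
    rw [hS.1 (lowstep ℓf u) (Wcf hN ℓf L u) k hkL', lowstep_low u hk]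
  have hstep_self : ∀ u, Mull hN L (lowstep ℓf u) (Wcf hN ℓf L u) ℓf = u ℓf + 1 := by
    intro u
    have hkL' : ((ℓf : Fin n) : ℕ) < L := by omega
    rw [hS.1 (lowstep ℓf u) (Wcf hN ℓf L u) ℓf hkL', lowstep_self]
  have hstep_high : ∀ (k : Fin n) (hk : L ≤ (k : ℕ)),
      (∀ u, Mull hN L (lowstep ℓf u) (Wcf hN ℓf L u) k = u k
        + (ψf k (by omega) u
          + phiM hN L k (Sum.elim (lowstep ℓf u) (Wcf hN ℓf L u)))) := by
    intro k hk u
    rw [Mull_eq, lowstep_high u (by omega), hψfE k (by omega) u]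
    ring
  have hσB : ∀ (k : Fin n) (hk : L ≤ (k : ℕ)), ∀ u u', (∀ j : Fin n, j < k → u j = u' j) →
      ψf k (by omega) u + phiM hN L k (Sum.elim (lowstep ℓf u) (Wcf hN ℓf L u))
      = ψf k (by omega) u' + phiM hN L k (Sum.elim (lowstep ℓf u') (Wcf hN ℓf L u')) := by
    intro k hk u u' hagree
    have h1 : ψf k (by omega) u = ψf k (by omega) u' := hψfB k (by omega) u u' hagree
    have h2 : phiM hN L k (Sum.elim (lowstep ℓf u) (Wcf hN ℓf L u))
        = phiM hN L k (Sum.elim (lowstep ℓf u') (Wcf hN ℓf L u')) := by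
      apply (hS.2 k hk).2
      · intro j' hj'
        rcases lt_trichotomy ((j' : ℕ)) ((ℓf : ℕ)) with h | h | h
        · simpa [lowstep_low u h, lowstep_low u' h] using hagree j' hj'
        · have : j' = ℓf := Fin.ext h
          subst this
          simp only [Sum.elim_inl, lowstep_self]
          rw [hagree j' hj']
        · simp [lowstep_high u h, lowstep_high u' h]
      · intro j' hj'
        simp only [Sum.elim_inr]
        by_cases h : L ≤ (j' : ℕ)
        · rw [hψfE j' h, hψfE j' h, hagree j' hj',
            hψfB j' h u u' (fun j'' hj'' => hagree j'' (lt_trans hj'' hj'))]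
        · rw [hWp.1 u j' (by omega), hWp.1 u' j' (by omega)]
    rw [h1, h2]
  -- part 1
  have part1 : ∀ x s (k : Fin n), (k : ℕ) < (ℓf : ℕ) → Pcf hN ℓf x s k = x k := by
    intro x s k hk
    induction s using Int.induction_on with
    | zero => rw [hP0]
    | succ i hi => rw [hPrec, hstep_low _ k hk, hi]
    | pred i hi =>
      have h1 := hPrec x (-(i : ℤ) - 1)
      rw [show (-(i : ℤ) - 1 + 1) = -(i : ℤ) by ring] at h1
      rw [h1, hstep_low _ k hk] at hi
      exact hi
  have part2 : ∀ x s, Pcf hN ℓf x s ℓf = x ℓf + s := by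
    intro x s
    induction s using Int.induction_on with
    | zero => rw [hP0]; ring
    | succ i hi => rw [hPrec, hstep_self, hi]; ring
    | pred i hi =>
      have h1 := hPrec x (-(i : ℤ) - 1)
      rw [show (-(i : ℤ) - 1 + 1) = -(i : ℤ) by ring] at h1
      rw [h1, hstep_self] at hi
      omega
  refine ⟨part1, part2, ?_⟩
  apply fin_strongInduction
  intro k IH
  rcases lt_trichotomy ((k : ℕ)) ((ℓf : ℕ)) with hkℓ | hkℓ | hkℓ
  · constructor
    · intro x x' s hagree
      rw [part1 x s k hkℓ, part1 x' s k hkℓ]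
      ring
    · exact (IsPoly.proj (Sum.inl k)).congr (fun y => (part1 (fun i => y (Sum.inl i)) (y (Sum.inr ())) k hkℓ).symm)
  · have hk : k = ℓf := Fin.ext hkℓ
    subst hk
    constructor
    · intro x x' s _
      rw [part2 x s, part2 x' s]
      ring
    · exact ((IsPoly.proj (Sum.inl k)).add (IsPoly.proj (Sum.inr ()))).congr
        (fun y => (part2 (fun i => y (Sum.inl i)) (y (Sum.inr ()))).symm)
  · -- ℓf < k, i.e. L ≤ k
    have hkL : L ≤ (k : ℕ) := by omega
    have hagreeP : ∀ (x x' : Fin n → ℤ) s (j' : Fin n), j' < k →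
        (∀ j : Fin n, j < k → x j = x' j) → Pcf hN ℓf x s j' = Pcf hN ℓf x' s j' := by
      intro x x' s j' hj' hagree
      rcases lt_trichotomy ((j' : ℕ)) ((ℓf : ℕ)) with h | h | h
      · rw [part1 x s j' h, part1 x' s j' h]
        exact hagree j' hj'
      · have : j' = ℓf := Fin.ext h
        subst this
        rw [part2, part2, hagree j' hj']
      · have hd := (IH j' hj').1 x x' s (fun j'' hj'' => hagree j'' (lt_trans hj'' hj'))
        have := hagree j' hj'
        omega
    have hDep : ∀ x x' s, (∀ j : Fin n, j < k → x j = x' j) →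
        Pcf hN ℓf x s k - x k = Pcf hN ℓf x' s k - x' k := by
      intro x x' s hagree
      induction s using Int.induction_on with
      | zero => rw [hP0, hP0]; ring
      | succ i hi =>
        rw [hPrec, hPrec, hstep_high k hkL, hstep_high k hkL,
          hσB k hkL (Pcf hN ℓf x i) (Pcf hN ℓf x' i)
            (fun j' hj' => hagreeP x x' i j' hj' hagree)]
        omega
      | pred i hi =>
        have h1 := hPrec x (-(i : ℤ) - 1)
        have h2 := hPrec x' (-(i : ℤ) - 1)
        rw [show (-(i : ℤ) - 1 + 1) = -(i : ℤ) by ring] at h1 h2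
        rw [h1, h2, hstep_high k hkL, hstep_high k hkL,
          hσB k hkL (Pcf hN ℓf x (-(i : ℤ) - 1)) (Pcf hN ℓf x' (-(i : ℤ) - 1))
            (fun j' hj' => hagreeP x x' (-(i : ℤ) - 1) j' hj' hagree)] at hi
        omega
    refine ⟨hDep, ?_⟩
    have hPolj : ∀ j' : Fin n, j' < k → IsPoly (fun y : (Fin n ⊕ Unit) → ℤ =>
        Pcf hN ℓf (fun i => y (Sum.inl i)) (y (Sum.inr ())) j') := fun j' hj' => (IH j' hj').2
    set tr : (Fin n → ℤ) → ℤ → Fin n → ℤ :=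
      fun x s i => if i < k then Pcf hN ℓf x s i else 0 with htr
    set gg : (Fin n ⊕ Fin n) → (Fin n → ℤ) → ℤ → ℤ := fun w x s =>
      match w with
      | Sum.inl j' => lowstep ℓf (tr x s) j'
      | Sum.inr j' => if hj : L ≤ (j' : ℕ) then
          (if j' < k then tr x s j' + ψf j' hj (tr x s) else 0) else 0 with hgg
    have htrP : ∀ i : Fin n, IsPoly (fun y : (Fin n ⊕ Unit) → ℤ =>
        tr (fun i' => y (Sum.inl i')) (y (Sum.inr ())) i) := by
      intro i
      by_cases h : i < k
      · exact (hPolj i h).congr (fun y => by simp only [htr]; rw [if_pos h])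
      · exact (IsPoly.const 0).congr (fun y => by simp only [htr]; rw [if_neg h])
    apply (IsPoly.integrate (σ := Fin n)
      (h := fun x s => ψf k hkL (tr x s) + phiM hN L k (fun w => gg w x s))
      (f := fun x s => Pcf hN ℓf x s k) ?_ ?_ ?_).congr (fun y => rfl)
    · -- the increment is polynomial
      apply IsPoly.add
      · exact ((hψfP k hkL).comp _ htrP).congr (fun y => rfl)
      · apply (((hS.2 k hkL).1).comp
          (fun w y => gg w (fun i => y (Sum.inl i)) (y (Sum.inr ()))) ?_).congr (fun y => rfl)
        intro w
        rcases w with j' | j'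
        · exact ((lowstep_poly ℓf j').comp _ htrP).congr (fun y => rfl)
        · by_cases hj : L ≤ (j' : ℕ)
          · by_cases hjk : j' < k
            · exact ((htrP j').add ((hψfP j' hj).comp _ htrP)).congr (fun y => by
                simp only [hgg]
                rw [dif_pos hj, if_pos hjk])
            · exact (IsPoly.const 0).congr (fun y => by
                simp only [hgg]
                rw [dif_pos hj, if_neg hjk])
          · exact (IsPoly.const 0).congr (fun y => by
              simp only [hgg]
              rw [dif_neg hj])
    · -- the value at time 0
      exact (IsPoly.proj k).congr (fun x => by
        show x k = Pcf hN ℓf x 0 k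
        rw [hP0])
    · -- the recursion
      intro x s
      show Pcf hN ℓf x (s + 1) k = Pcf hN ℓf x s k
        + (ψf k hkL (tr x s) + phiM hN L k (fun w => gg w x s))
      rw [hPrec, hstep_high k hkL,
        hσB k hkL (Pcf hN ℓf x s) (tr x s)
          (fun j' hj' => by simp only [htr]; rw [if_pos hj'])]
      congr 2
      apply (hS.2 k hkL).2
      · intro j' hj'
        simp only [hgg, Sum.elim_inl]
      · intro j' hj'
        simp only [hgg, Sum.elim_inr]
        by_cases hj2 : L ≤ (j' : ℕ)
        · rw [hψfE j' hj2 (tr x s), dif_pos hj2, if_pos hj']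
        · rw [hWp.1 (tr x s) j' (by omega), dif_neg hj2]

end PSec


section ShapeStep

lemma shape_step (ℓ : ℕ) (hℓ : ℓ < n) (hS : ShapeS hN (ℓ + 1)) : ShapeS hN ℓ := by
  classical
  set ℓf : Fin n := ⟨ℓ, hℓ⟩ with hℓf
  have hℓval : (ℓf : ℕ) = ℓ := rfl
  have hS' : ShapeS hN ((ℓf : ℕ) + 1) := hS
  obtain ⟨P1, P2, P3⟩ := P_main hN ℓf hS'
  have hMeq : ∀ x y, Mull hN ℓ x y = Mull hN (ℓ + 1) (Pcf hN ℓf x (y ℓf)) y := by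
    intro x y
    unfold Mull
    rw [N_mask_cons hℓ, ← mul_assoc,
      show N n t x * a n t ℓf ^ y ℓf = N n t (Pcf hN ℓf x (y ℓf)) from (N_cof hN _).symm]
  have hagreeP : ∀ (x x' : Fin n → ℤ) (s : ℤ) (k : Fin n) (j' : Fin n), j' < k →
      (∀ j : Fin n, j < k → x j = x' j) → Pcf hN ℓf x s j' = Pcf hN ℓf x' s j' := by
    intro x x' s k j' hj' hagree
    rcases lt_trichotomy ((j' : ℕ)) ((ℓf : ℕ)) with h | h | h
    · rw [P1 x s j' h, P1 x' s j' h]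
      exact hagree j' hj'
    · have hj : j' = ℓf := Fin.ext h
      rw [hj, P2, P2, hagree ℓf (hj ▸ hj')]
    · have hd := (P3 j').1 x x' s (fun j'' hj'' => hagree j'' (lt_trans hj'' hj'))
      have := hagree j' hj'
      omega
  constructor
  · intro x y k hk
    rw [hMeq, hS.1 _ _ _ (by omega), P1 x (y ℓf) k hk]
  · intro k hk
    rcases eq_or_lt_of_le hk with hkeq | hklt
    · -- k = ℓf
      have hkf : k = ℓf := Fin.ext hkeq.symm
      have hval : ∀ v : Fin n ⊕ Fin n → ℤ, phiM hN ℓ k v = 0 := by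
        intro v
        show Mull hN ℓ (fun j => v (Sum.inl j)) (fun j => v (Sum.inr j)) k
          - v (Sum.inl k) - v (Sum.inr k) = 0
        rw [hMeq, hS.1 _ _ _ (by omega), hkf, P2]
        ring
      constructor
      · exact (IsPoly.const 0).congr (fun v => (hval v).symm)
      · intro v w _ _
        rw [hval v, hval w]
    · -- ℓ < k
      have hkL : ℓ + 1 ≤ (k : ℕ) := hklt
      have hform : ∀ v : Fin n ⊕ Fin n → ℤ, phiM hN ℓ k v
          = (Pcf hN ℓf (fun j => v (Sum.inl j)) (v (Sum.inr ℓf)) k - v (Sum.inl k))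
            + phiM hN (ℓ + 1) k (Sum.elim
              (Pcf hN ℓf (fun j => v (Sum.inl j)) (v (Sum.inr ℓf)))
              (fun j => v (Sum.inr j))) := by
        intro v
        show Mull hN ℓ _ _ k - _ - _ = _
        rw [hMeq, Mull_eq hN (ℓ + 1)]
        ring
      set gA : (Fin n ⊕ Unit) → (Fin n ⊕ Fin n → ℤ) → ℤ := fun w =>
        match w with
        | Sum.inl i => fun v => v (Sum.inl i)
        | Sum.inr _ => fun v => v (Sum.inr ℓf) with hgA
      have hgAP : ∀ w, IsPoly (gA w) := by
        intro w
        rcases w with i | u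
        · exact IsPoly.proj (Sum.inl i)
        · exact IsPoly.proj (Sum.inr ℓf)
      have hAj : ∀ j' : Fin n, IsPoly (fun v : Fin n ⊕ Fin n → ℤ =>
          Pcf hN ℓf (fun i => v (Sum.inl i)) (v (Sum.inr ℓf)) j') := by
        intro j'
        exact (((P3 j').2).comp gA hgAP).congr (fun v => rfl)
      set gB : (Fin n ⊕ Fin n) → (Fin n ⊕ Fin n → ℤ) → ℤ := fun w =>
        match w with
        | Sum.inl j' => if j' < k then
            (fun v => Pcf hN ℓf (fun i => v (Sum.inl i)) (v (Sum.inr ℓf)) j') else fun _ => 0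
        | Sum.inr j' => fun v => v (Sum.inr j') with hgB
      have hgBP : ∀ w, IsPoly (gB w) := by
        intro w
        rcases w with j' | j'
        · by_cases hj' : j' < k
          · simp only [hgB, if_pos hj']
            exact hAj j'
          · simp only [hgB, if_neg hj']
            exact IsPoly.const 0
        · exact IsPoly.proj (Sum.inr j')
      have harg : ∀ v : Fin n ⊕ Fin n → ℤ,
          phiM hN (ℓ + 1) k (Sum.elim
            (Pcf hN ℓf (fun j => v (Sum.inl j)) (v (Sum.inr ℓf)))
            (fun j => v (Sum.inr j)))
          = phiM hN (ℓ + 1) k (fun w => gB w v) := by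
        intro v
        apply (hS.2 k hkL).2
        · intro j' hj'
          simp only [hgB, Sum.elim_inl, if_pos hj']
        · intro j' _
          simp only [hgB, Sum.elim_inr]
      constructor
      · -- IsPoly
        apply (((hAj k).sub (IsPoly.proj (Sum.inl k))).add
          (((hS.2 k hkL).1).comp gB hgBP)).congr
        intro v
        rw [hform v, harg v]
      · -- Below2
        intro v w h1 h2
        have hs : v (Sum.inr ℓf) = w (Sum.inr ℓf) := h2 ℓf (by rw [Fin.lt_def]; omega)
        rw [hform v, hform w, hs]
        have hDepk : Pcf hN ℓf (fun j => v (Sum.inl j)) (w (Sum.inr ℓf)) k - v (Sum.inl k)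
            = Pcf hN ℓf (fun j => w (Sum.inl j)) (w (Sum.inr ℓf)) k - w (Sum.inl k) :=
          (P3 k).1 (fun j => v (Sum.inl j)) (fun j => w (Sum.inl j))
            (w (Sum.inr ℓf)) (fun j hj => h1 j hj)
        have hphi : phiM hN (ℓ + 1) k (Sum.elim
              (Pcf hN ℓf (fun j => v (Sum.inl j)) (w (Sum.inr ℓf)))
              (fun j => v (Sum.inr j)))
            = phiM hN (ℓ + 1) k (Sum.elim
              (Pcf hN ℓf (fun j => w (Sum.inl j)) (w (Sum.inr ℓf)))
              (fun j => w (Sum.inr j))) := by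
          apply (hS.2 k hkL).2
          · intro j' hj'
            simp only [Sum.elim_inl]
            exact hagreeP _ _ _ k j' hj' (fun j hj => h1 j hj)
          · intro j' hj'
            simpa using h2 j' hj'
        rw [hphi]
        omega

lemma shape_all : ∀ ℓ : ℕ, ShapeS hN ℓ := by
  have key : ∀ d ℓ : ℕ, n ≤ ℓ + d → ShapeS hN ℓ := by
    intro d
    induction d with
    | zero => exact fun ℓ hℓ => shape_top hN ℓ (by omega)
    | succ d ih =>
      intro ℓ hℓ
      rcases le_or_gt n ℓ with h | h
      · exact shape_top hN ℓ h
      · exact shape_step hN ℓ h (ih (ℓ + 1) (by omega))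
  exact fun ℓ => key n ℓ (by omega)

/-- Coordinates of arbitrary powers are polynomial. -/
lemma pow_all_poly : ∀ k : Fin n, IsPoly (fun y : (Fin n ⊕ Unit) → ℤ =>
    pwc hN (fun i => y (Sum.inl i)) (y (Sum.inr ())) k) := by
  classical
  have S0 : ShapeS hN 0 := shape_all hN 0
  have hrecZ : ∀ (x : Fin n → ℤ) (z : ℤ), pwc hN x (z + 1) = Mull hN 0 (pwc hN x z) x := by
    intro x z
    unfold Mull
    rw [show mask 0 x = x from funext fun k => mask_le (Nat.zero_le _)]
    unfold pwc
    rw [N_cof, ← zpow_add_one]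
  have hz0 : ∀ x : Fin n → ℤ, pwc hN x 0 = fun _ => 0 := by
    intro x
    unfold pwc
    rw [zpow_zero, cof_one]
  apply fin_strongInduction
  intro k IH
  set gZ : (Fin n ⊕ Fin n) → ((Fin n ⊕ Unit) → ℤ) → ℤ := fun w =>
    match w with
    | Sum.inl j' => if hj' : j' < k then
        (fun y => pwc hN (fun i => y (Sum.inl i)) (y (Sum.inr ())) j') else fun _ => 0
    | Sum.inr j' => fun y => y (Sum.inl j') with hgZ
  have hgZP : ∀ w, IsPoly (gZ w) := by
    intro w
    rcases w with j' | j'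
    · by_cases hj' : j' < k
      · simp only [hgZ, dif_pos hj']
        exact IH j' hj'
      · simp only [hgZ, dif_neg hj']
        exact IsPoly.const 0
    · exact IsPoly.proj (Sum.inl j')
  apply (IsPoly.integrate (σ := Fin n)
    (h := fun x z => x k + phiM hN 0 k (fun w =>
      gZ w (Sum.elim x (fun _ => z))))
    (f := fun x z => pwc hN x z k) ?_ ?_ ?_).congr (fun y => rfl)
  · apply ((IsPoly.proj (Sum.inl k)).add
      (((S0.2 k (Nat.zero_le _)).1).comp (fun w y => gZ w y) hgZP)).congr
    intro y
    congr 2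
    funext w
    rcases w with j' | j'
    · by_cases hj' : j' < k
      · simp only [hgZ, dif_pos hj']
        rfl
      · simp only [hgZ, dif_neg hj']
    · rfl
  · exact (IsPoly.const 0).congr (fun x => by
      show (0 : ℤ) = pwc hN x 0 k
      rw [hz0 x])
  · intro x z
    show pwc hN x (z + 1) k = pwc hN x z k
      + (x k + phiM hN 0 k (fun w => gZ w (Sum.elim x (fun _ => z))))
    rw [hrecZ, Mull_eq]
    have harg : phiM hN 0 k (Sum.elim (pwc hN x z) x)
        = phiM hN 0 k (fun w => gZ w (Sum.elim x (fun _ => z))) := by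
      apply (S0.2 k (Nat.zero_le _)).2
      · intro j' hj'
        simp only [hgZ, Sum.elim_inl, dif_pos hj']
        rfl
      · intro j' _
        simp only [hgZ, Sum.elim_inr]
        rfl
    rw [harg]
    ring

end ShapeStep

end Master




/-- Hall's theorem, powering polynomials: if `G(t)` is consistent, there exist rational
polynomials `K_1, …, K_n` in the variables `x_1, …, x_n, z` that take integer values on
integer arguments and satisfy
`(a_1^{x_1} ⋯ a_n^{x_n})^z = a_1^{K_1(x,z)} ⋯ a_n^{K_n(x,z)}` in `G(t)` for all `x ∈ ℤⁿ`
and `z ∈ ℤ`. -/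
theorem exists_powering_polynomials (n : ℕ) (t : Fin n → Fin n → Fin n → ℤ)
    (hN : Function.Bijective (N n t)) :
    ∃ K : Fin n → MvPolynomial (Fin n ⊕ Unit) ℚ,
      ∀ (x : Fin n → ℤ) (z : ℤ), ∃ v : Fin n → ℤ,
        (∀ i : Fin n, (v i : ℚ) =
          MvPolynomial.eval (Sum.elim (fun i => (x i : ℚ)) (fun _ => (z : ℚ))) (K i)) ∧
        N n t x ^ z = N n t v := by
  classical
  have hpoly := pow_all_poly hN
  choose K hK using hpoly
  refine ⟨K, fun x z => ⟨pwc hN x z, ?_, ?_⟩⟩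
  · intro i
    have h := hK i (Sum.elim x (fun _ => z))
    rw [show (Sum.elim (fun i => (x i : ℚ)) (fun _ => (z : ℚ)))
        = (fun v => ((Sum.elim x (fun _ => z) v : ℤ) : ℚ)) from funext fun v => by
      cases v with
      | inl i => rfl
      | inr u => cases u; rfl]
    exact h
  · exact (N_cof hN _).symm

end HallPoly
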